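/- Let K be a nonarchimedean local field with ring of integers O, uniformizer π, and normalized valuation v. Let t₁, t₂ ∈ K^× with v(t₁) + v(t₂) = 1, and define the additive map z: K ⊕ K → K ⊕ K by z(a, b) = (t₁·b, t₂·a). Then for (m₁, m₂) ∈ ℤ², the lattice Λ = π^{m₁}O ⊕ π^{m₂}O satisfies z(Λ) ⊆ Λ if and only if −v(t₂) ≤ m₁ − m₂ ≤ v(t₁); consequently, the set of such lattices up to simultaneous scaling by powers of π (i.e., up to (m₁, m₂) ↦ (m₁ + k, m₂ + k) for k ∈ ℤ) has exactly two elements. -/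

import Mathlib

section Aux

variable {A K : Type*} [CommRing A] [IsDomain A] [IsDiscreteValuationRing A]
  [Field K] [Algebra A K] [IsFractionRing A K]

lemma aux_pi_ne_zero (π : A) (hπ : Irreducible π) : (algebraMap A K π) ≠ 0 :=
  (map_ne_zero_iff _ (IsFractionRing.injective A K)).mpr hπ.ne_zero

lemma aux_pow_nonneg (π : A) (hπ : Irreducible π) (d : ℤ) (b : A)
    (h : (algebraMap A K π) ^ d = algebraMap A K b) : 0 ≤ d := by
  by_contra hd
  push_neg at hd
  have hπ0 : (algebraMap A K π) ≠ 0 := aux_pi_ne_zero π hπ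
  have h1 : algebraMap A K (π ^ (-d).toNat * b) = algebraMap A K 1 := by
    rw [map_mul, map_one, map_pow, ← h, ← zpow_natCast (algebraMap A K π),
      ← zpow_add₀ hπ0, Int.toNat_of_nonneg (by omega)]
    simp
  have h2 : π ^ (-d).toNat * b = 1 := IsFractionRing.injective A K h1
  have hdvd : π ∣ 1 := h2 ▸ dvd_mul_of_dvd_left (dvd_pow_self π (by omega)) b
  exact hπ.not_isUnit (isUnit_of_dvd_one hdvd)

lemma aux_stable (π : A) (hπ : Irreducible π) (e m n : ℤ) (u : Aˣ) :
    (∀ x : K, (∃ a : A, x = (algebraMap A K π) ^ n * algebraMap A K a) →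
      ∃ a : A, (algebraMap A K π) ^ e * algebraMap A K (u : A) * x
        = (algebraMap A K π) ^ m * algebraMap A K a) ↔ m ≤ e + n := by
  have hπ0 : (algebraMap A K π) ≠ 0 := aux_pi_ne_zero π hπ
  constructor
  · intro h
    obtain ⟨a, ha⟩ := h ((algebraMap A K π) ^ n) ⟨1, by simp⟩
    have huv : algebraMap A K ((u : A)) * algebraMap A K ((↑u⁻¹ : A)) = 1 := by
      rw [← map_mul]
      simp
    have key : (algebraMap A K π) ^ (e + n - m) = algebraMap A K (a * (↑u⁻¹ : A)) := by
      rw [map_mul, zpow_sub₀ hπ0, zpow_add₀ hπ0, div_eq_iff (zpow_ne_zero _ hπ0)]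
      linear_combination (algebraMap A K ((↑u⁻¹ : A))) * ha
        - (algebraMap A K π ^ e * algebraMap A K π ^ n) * huv
    have := aux_pow_nonneg (K := K) π hπ _ _ key
    omega
  · rintro h x ⟨a, rfl⟩
    refine ⟨π ^ (e + n - m).toNat * ((u : A) * a), ?_⟩
    have hsplit : (algebraMap A K π) ^ e * (algebraMap A K π) ^ n
        = (algebraMap A K π) ^ m * (algebraMap A K π) ^ (e + n - m) := by
      rw [← zpow_add₀ hπ0, ← zpow_add₀ hπ0]
      congr 1
      omega
    have hpow : (algebraMap A K π) ^ (e + n - m) = algebraMap A K (π ^ (e + n - m).toNat) := by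
      rw [map_pow, ← zpow_natCast (algebraMap A K π), Int.toNat_of_nonneg (by omega)]
    calc (algebraMap A K π) ^ e * algebraMap A K (u : A)
          * ((algebraMap A K π) ^ n * algebraMap A K a)
        = ((algebraMap A K π) ^ e * (algebraMap A K π) ^ n)
          * (algebraMap A K (u : A) * algebraMap A K a) := by ring
      _ = (algebraMap A K π) ^ m * ((algebraMap A K π) ^ (e + n - m)
          * (algebraMap A K (u : A) * algebraMap A K a)) := by rw [hsplit]; ring
      _ = (algebraMap A K π) ^ m * algebraMap A K (π ^ (e + n - m).toNat * ((u : A) * a)) := by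
          rw [map_mul, map_mul, hpow]

end Aux

/-- lattice count in the split/unramified case of Theorem 4.14
of the paper. Let `K` be a nonarchimedean local field with ring of integers `O`,
uniformizer `π` and normalized valuation `v`.  Let `t₁, t₂ ∈ K^×` with
`v(t₁) + v(t₂) = 1` (encoded as `tᵢ = π^{eᵢ}·uᵢ` with `uᵢ ∈ O^×` and
`e₁ + e₂ = 1`), and define `z : K ⊕ K → K ⊕ K` by `z(a, b) = (t₁·b, t₂·a)`.
Then the lattice `Λ = π^{m₁}O ⊕ π^{m₂}O` satisfies `z(Λ) ⊆ Λ` if and only if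
`-v(t₂) ≤ m₁ - m₂ ≤ v(t₁)`, and the set of such lattices up to simultaneous
scaling by powers of `π` has exactly two elements. -/
theorem stmt_19
    (A : Type*) [CommRing A] [IsDomain A] [IsDiscreteValuationRing A]
    [IsAdicComplete (IsLocalRing.maximalIdeal A) A]
    [Finite (IsLocalRing.ResidueField A)]
    (K : Type*) [Field K] [Algebra A K] [IsFractionRing A K]
    (π : A) (hπ : Irreducible π)
    (e₁ e₂ : ℤ) (he : e₁ + e₂ = 1) (u₁ u₂ : Aˣ) :
    let πK : K := algebraMap A K π
    let t₁ : K := πK ^ e₁ * algebraMap A K (u₁ : A)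
    let t₂ : K := πK ^ e₂ * algebraMap A K (u₂ : A)
    let mem : ℤ → K → Prop := fun m x => ∃ a : A, x = πK ^ m * algebraMap A K a
    let stable : ℤ → ℤ → Prop := fun m₁ m₂ =>
      (∀ b : K, mem m₂ b → mem m₁ (t₁ * b)) ∧
      (∀ a : K, mem m₁ a → mem m₂ (t₂ * a))
    (∀ m₁ m₂ : ℤ, stable m₁ m₂ ↔ (-e₂ ≤ m₁ - m₂ ∧ m₁ - m₂ ≤ e₁)) ∧
    Nat.card (Quot (fun p p' : {m : ℤ × ℤ // stable m.1 m.2} =>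
      ∃ k : ℤ, (p' : ℤ × ℤ) = (p.1.1 + k, p.1.2 + k))) = 2 := by
  intro πK t₁ t₂ mem stable
  have H : ∀ m₁ m₂ : ℤ, stable m₁ m₂ ↔ (-e₂ ≤ m₁ - m₂ ∧ m₁ - m₂ ≤ e₁) := by
    intro m₁ m₂
    have h1 := aux_stable (K := K) π hπ e₁ m₁ m₂ u₁
    have h2 := aux_stable (K := K) π hπ e₂ m₂ m₁ u₂
    constructor
    · rintro ⟨s1, s2⟩
      have c1 := h1.mp s1
      have c2 := h2.mp s2
      omega
    · rintro ⟨c1, c2⟩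
      exact ⟨h1.mpr (by omega), h2.mpr (by omega)⟩
  refine ⟨H, ?_⟩
  have hs0 : ∀ d : ℤ, d ∈ Set.Icc (-e₂) e₁ → stable d 0 := by
    intro d hd
    exact (H d 0).mpr (by simp only [Set.mem_Icc] at hd; omega)
  let E : Quot (fun p p' : {m : ℤ × ℤ // stable m.1 m.2} =>
      ∃ k : ℤ, (p' : ℤ × ℤ) = (p.1.1 + k, p.1.2 + k)) ≃ (Set.Icc (-e₂) e₁) :=
    { toFun := Quot.lift (fun p => ⟨p.1.1 - p.1.2, by
        have := (H p.1.1 p.1.2).mp p.2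
        simp only [Set.mem_Icc]
        omega⟩)
        (by
          rintro p p' ⟨k, hk⟩
          have h1 : p'.1.1 = p.1.1 + k := congrArg Prod.fst hk
          have h2 : p'.1.2 = p.1.2 + k := congrArg Prod.snd hk
          exact Subtype.ext (by simp only; omega))
      invFun := fun d => Quot.mk _ ⟨(d.1, 0), hs0 d.1 d.2⟩
      left_inv := by
        apply Quot.ind
        intro p
        apply Quot.sound
        exact ⟨p.1.2, by ext <;> simp⟩
      right_inv := fun d => Subtype.ext (by simp) }
  rw [Nat.card_congr E, ← Finset.coe_Icc, Nat.card_coe_set_eq,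
    Set.ncard_coe_finset, Int.card_Icc]
  omega
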